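/- Let W(z) = Σ_{m ∈ Ω} w_m z^{m−1} be a polynomial of degree at most M̄ − 1 (with Ω ⊆ {1,…,M̄}) and let W̄ = sup_{f ∈ [0,1)} |W(e^{i2πf})|. Then for any integer N > π M̄ and the uniform grid {0, 1/N, …, (N−1)/N}: W̄ ≤ (1 − π M̄ / N)^{-1} · max_{0 ≤ m ≤ N−1} |W(e^{i2π m/N})|. -/

import Mathlib

open Complex Real

/-- Local stand-in for the former `Complex.abs`, as the norm packaged as an absolute value. -/
noncomputable def Complex.abs : AbsoluteValue ℂ ℝ where
  toFun := fun z => ‖z‖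
  map_mul' := norm_mul
  nonneg' := norm_nonneg
  eq_zero' := fun _ => norm_eq_zero
  add_le' := norm_add_le

lemma Complex.norm_eq_abs (z : ℂ) : ‖z‖ = Complex.abs z := rfl
lemma Complex.abs_of_nonneg {r : ℝ} (h : 0 ≤ r) : Complex.abs r = r := Complex.norm_of_nonneg h
lemma Complex.abs_natCast (n : ℕ) : Complex.abs n = n := Complex.norm_natCast n
lemma Complex.abs_conj (z : ℂ) : Complex.abs ((starRingEnd ℂ) z) = Complex.abs z := Complex.norm_conj z
lemma Complex.abs_exp (z : ℂ) : Complex.abs (Complex.exp z) = Real.exp z.re := Complex.norm_exp z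
lemma Complex.abs_exp_ofReal_mul_I (x : ℝ) : Complex.abs (Complex.exp (x * I)) = 1 :=
  Complex.norm_exp_ofReal_mul_I x
lemma Complex.re_le_abs (z : ℂ) : z.re ≤ Complex.abs z := Complex.re_le_norm z
lemma Complex.sq_abs (z : ℂ) : Complex.abs z ^ 2 = Complex.normSq z := Complex.sq_norm z
lemma Complex.abs_mul_exp_arg_mul_I (x : ℂ) : (Complex.abs x : ℂ) * Complex.exp (x.arg * I) = x :=
  Complex.norm_mul_exp_arg_mul_I x

section BernsteinHelpers
open Polynomial

lemma logderiv (s : Multiset ℂ) (z : ℂ) (hz : ∀ r ∈ s, z ≠ r) :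
    Polynomial.eval z (Polynomial.derivative (s.map (fun a => X - C a)).prod) =
      Polynomial.eval z (s.map (fun a => X - C a)).prod * (s.map (fun a => (z - a)⁻¹)).sum := by
  induction s using Multiset.induction_on with
  | empty => simp
  | cons a s ih =>
    have ha : z - a ≠ 0 := sub_ne_zero.2 (hz a (Multiset.mem_cons_self a s))
    have ih' := ih (fun r hr => hz r (Multiset.mem_cons_of_mem hr))
    simp only [Multiset.map_cons, Multiset.prod_cons, Multiset.sum_cons, derivative_mul,
      derivative_sub, derivative_X, derivative_C, sub_zero, one_mul, eval_add, eval_mul,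
      eval_sub, eval_X, eval_C, ih']
    field_simp

lemma growth (n : ℕ) (p : Polynomial ℂ) (hdeg : p.natDegree ≤ n) (M : ℝ)
    (hM : ∀ z : ℂ, Complex.abs z = 1 → Complex.abs (p.eval z) ≤ M) :
    ∀ w : ℂ, 1 ≤ Complex.abs w → Complex.abs (p.eval w) ≤ M * Complex.abs w ^ n := by
  set F : ℂ → ℂ := fun z => ∑ k ∈ Finset.range (n + 1), p.coeff k * z ^ (n - k) with hF
  have hFd : Differentiable ℂ F := by
    apply Differentiable.fun_sum
    intro k _
    exact (differentiable_pow _).const_mul _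
  have hFball : ∀ z ∈ Metric.closedBall (0 : ℂ) 1, Complex.abs (F z) ≤ M := by
    intro z hz
    rw [← closure_ball (0:ℂ) one_ne_zero] at hz
    refine Complex.norm_le_of_forall_mem_frontier_norm_le Metric.isBounded_ball
      hFd.diffContOnCl ?_ hz
    intro ζ hζ
    rw [frontier_ball (0:ℂ) one_ne_zero, mem_sphere_zero_iff_norm] at hζ
    have hζ0 : ζ ≠ 0 := by
      intro h; rw [h] at hζ; simp at hζ
    have habs : Complex.abs ζ = 1 := hζ
    have hinv : Complex.abs ζ⁻¹ = 1 := by rw [map_inv₀, habs]; norm_num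
    have key : F ζ = ζ ^ n * p.eval ζ⁻¹ := by
      rw [hF]
      rw [Polynomial.eval_eq_sum_range' (Nat.lt_succ_of_le hdeg), Finset.mul_sum]
      refine Finset.sum_congr rfl fun k hk => ?_
      rw [Finset.mem_range, Nat.lt_succ_iff] at hk
      have hzn : ζ ^ n = ζ ^ (n - k) * ζ ^ k := by
        rw [← pow_add, Nat.sub_add_cancel hk]
      rw [mul_comm (p.coeff k), inv_pow, ← mul_assoc, hzn]
      have h2 : ζ ^ k ≠ 0 := pow_ne_zero _ hζ0
      field_simp
    rw [key]
    simp only [Complex.norm_eq_abs, map_mul, map_pow, habs, one_pow, one_mul]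
    exact hM _ hinv
  intro w hw
  have hw0 : w ≠ 0 := by
    intro h; rw [h] at hw; simp at hw; linarith
  have hwinv : w⁻¹ ∈ Metric.closedBall (0 : ℂ) 1 := by
    rw [Metric.mem_closedBall, dist_zero_right, Complex.norm_eq_abs, map_inv₀]
    exact inv_le_one_of_one_le₀ hw
  have key : p.eval w = w ^ n * F w⁻¹ := by
    rw [hF, Polynomial.eval_eq_sum_range' (Nat.lt_succ_of_le hdeg), Finset.mul_sum]
    refine Finset.sum_congr rfl fun k hk => ?_
    rw [Finset.mem_range, Nat.lt_succ_iff] at hk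
    have hwn : w ^ n = w ^ k * w ^ (n - k) := by
      rw [← pow_add, Nat.add_sub_cancel' hk]
    rw [mul_comm (p.coeff k), inv_pow, ← mul_assoc, hwn]
    have h2 : w ^ (n - k) ≠ 0 := pow_ne_zero _ hw0
    field_simp
  calc Complex.abs (p.eval w) = Complex.abs w ^ n * Complex.abs (F w⁻¹) := by
        rw [key]; simp [map_mul, map_pow]
    _ ≤ Complex.abs w ^ n * M := by
        gcongr
        exact hFball _ hwinv
    _ = M * Complex.abs w ^ n := mul_comm _ _

lemma circle_infinite_roots (p : Polynomial ℂ)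
    (h : ∀ z : ℂ, Complex.abs z = 1 → p.eval z = 0) : p = 0 := by
  apply Polynomial.eq_zero_of_infinite_isRoot
  have hinj : Set.InjOn (fun t : ℝ => Complex.exp (t * Complex.I)) (Set.Ioo 0 1) := by
    intro a ha b hb hab
    simp only at hab
    rw [Complex.exp_eq_exp_iff_exists_int] at hab
    obtain ⟨k, hk⟩ := hab
    have hC : (a : ℂ) = b + k * (2 * Real.pi) := by
      have h2 : ((a:ℂ) - (b + k * (2 * Real.pi))) * Complex.I = 0 := by
        push_cast at hk ⊢; linear_combination hk
      have h3 := (mul_eq_zero.1 h2).resolve_right Complex.I_ne_zero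
      linear_combination h3
    have hR : a = b + k * (2 * Real.pi) := by exact_mod_cast hC
    have hk0 : k = 0 := by
      rcases lt_trichotomy (k:ℝ) 0 with hlt | heq | hgt
      · have hk' : k < 0 := by exact_mod_cast hlt
        have hk2 : k ≤ -1 := by omega
        have : (k:ℝ) ≤ -1 := by exact_mod_cast hk2
        nlinarith [Real.pi_gt_three, ha.1, ha.2, hb.1, hb.2]
      · exact_mod_cast heq
      · have hk' : 0 < k := by exact_mod_cast hgt
        have hk2 : 1 ≤ k := by omega
        have : (1:ℝ) ≤ k := by exact_mod_cast hk2
        nlinarith [Real.pi_gt_three, ha.1, ha.2, hb.1, hb.2]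
    rw [hk0] at hR; simpa using hR
  have hsub : (fun t : ℝ => Complex.exp (t * Complex.I)) '' (Set.Ioo 0 1) ⊆ {x | p.IsRoot x} := by
    rintro _ ⟨t, _, rfl⟩
    exact h _ (by simp [Complex.abs_exp])
  exact Set.Infinite.mono hsub ((Set.Ioo_infinite (by norm_num)).image hinj)

lemma re_multiset_sum (s : Multiset ℂ) : s.sum.re = (s.map Complex.re).sum := by
  induction s using Multiset.induction_on with
  | empty => simp
  | cons a s ih => simp [ih]

lemma bernstein_ineq (n : ℕ) (p : Polynomial ℂ) (hdeg : p.natDegree < n) (M : ℝ)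
    (hM : ∀ z : ℂ, Complex.abs z = 1 → Complex.abs (p.eval z) ≤ M) :
    ∀ z : ℂ, Complex.abs z = 1 → Complex.abs (p.derivative.eval z) ≤ n * M := by
  have hM0 : 0 ≤ M := le_trans (Complex.abs.nonneg _) (hM 1 (by simp))
  rcases eq_or_lt_of_le hM0 with hM0' | hMpos
  · -- M = 0 : p vanishes on circle hence p = 0
    have hp0 : p = 0 := by
      apply circle_infinite_roots
      intro z hz
      have := hM z hz
      rw [← hM0'] at this
      exact Complex.abs.eq_zero.1 (le_antisymm this (Complex.abs.nonneg _))
    intro z hz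
    simp [hp0, ← hM0']
  intro z₀ hz₀
  by_contra hcon
  push_neg at hcon
  have hn : 1 ≤ n := Nat.one_le_iff_ne_zero.2 (by rintro rfl; omega)
  have hz₀0 : z₀ ≠ 0 := fun h => by simp [h] at hz₀
  have hnM : (0:ℝ) < n * M := mul_pos (by exact_mod_cast hn) hMpos
  set d : ℂ := (n : ℂ) * M * z₀ ^ (n - 1) with hd
  have hdne : d ≠ 0 := by
    apply mul_ne_zero (mul_ne_zero _ _) (pow_ne_zero _ hz₀0)
    · exact_mod_cast Nat.one_le_iff_ne_zero.1 hn
    · exact_mod_cast ne_of_gt hMpos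
  set lam : ℂ := p.derivative.eval z₀ / d with hlam
  have habsd : Complex.abs d = n * M := by
    simp [hd, map_mul, map_pow, hz₀, Complex.abs_natCast, Complex.abs_of_nonneg hM0]
  have hlam1 : 1 < Complex.abs lam := by
    rw [hlam, map_div₀, habsd]
    rw [lt_div_iff₀ hnM]
    simpa using hcon
  have hlamM : lam * M ≠ 0 := by
    apply mul_ne_zero
    · intro h; rw [h] at hlam1; simp at hlam1; linarith
    · exact_mod_cast ne_of_gt hMpos
  set g : Polynomial ℂ := p - C (lam * M) * X ^ n with hg
  have hcoeff : g.coeff n = -(lam * M) := by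
    rw [hg, Polynomial.coeff_sub, Polynomial.coeff_C_mul, Polynomial.coeff_X_pow,
      if_pos rfl, mul_one, Polynomial.coeff_eq_zero_of_natDegree_lt hdeg, zero_sub]
  have hgne : g ≠ 0 := by
    intro h
    apply hlamM
    have h2 : (0 : Polynomial ℂ).coeff n = -(lam * M) := h ▸ hcoeff
    rw [Polynomial.coeff_zero] at h2
    exact neg_eq_zero.1 h2.symm
  have hgdegle : g.natDegree ≤ n := by
    rw [hg]
    apply le_trans (Polynomial.natDegree_sub_le _ _)
    apply max_le (le_of_lt hdeg)
    exact le_trans (Polynomial.natDegree_mul_le)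
      (by rw [Polynomial.natDegree_C, Polynomial.natDegree_X_pow, zero_add])
  have hgdeg : g.natDegree = n :=
    le_antisymm hgdegle (Polynomial.le_natDegree_of_ne_zero (by rw [hcoeff]; simpa using hlamM))
  have hcard : g.roots.card = n := by
    rw [← hgdeg]
    exact (Polynomial.splits_iff_card_roots.1 (IsAlgClosed.splits g))
  -- every root of g is in the open unit disk
  have hroots : ∀ r ∈ g.roots, Complex.abs r < 1 := by
    intro r hr
    by_contra hr1
    push_neg at hr1
    have hre : g.eval r = 0 := Polynomial.isRoot_of_mem_roots hr
    have hpr : p.eval r = lam * M * r ^ n := by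
      have h0 : p.eval r - lam * M * r ^ n = 0 := by
        simpa [hg] using hre
      linear_combination h0
    have hgrow := growth n p (le_of_lt hdeg) M hM r hr1
    have habsr : Complex.abs (p.eval r) = Complex.abs lam * M * Complex.abs r ^ n := by
      rw [hpr, map_mul, map_mul, map_pow, Complex.abs_of_nonneg hM0]
    have hpow : (0:ℝ) < Complex.abs r ^ n := pow_pos (lt_of_lt_of_le one_pos hr1) n
    nlinarith [mul_lt_mul_of_pos_right hlam1 (mul_pos hMpos hpow)]
  -- z₀ is not a root of g
  have hz₀root : ∀ r ∈ g.roots, z₀ ≠ r := by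
    intro r hr h
    have := hroots r hr
    rw [← h, hz₀] at this
    linarith
  -- factor g
  have hfact : Polynomial.C g.leadingCoeff * (g.roots.map fun a => X - C a).prod = g :=
    Polynomial.C_leadingCoeff_mul_prod_multiset_X_sub_C (by rw [hcard, hgdeg])
  have hlc : g.leadingCoeff ≠ 0 := Polynomial.leadingCoeff_ne_zero.2 hgne
  -- positive real part of z₀ * sum of reciprocals
  set S : ℂ := (g.roots.map fun a => (z₀ - a)⁻¹).sum with hS
  have hroots_ne : g.roots ≠ 0 := by
    intro h
    rw [h] at hcard
    simp at hcard
    omega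
  have hre_pos : 0 < (z₀ * S).re := by
    have h1 : z₀ * S = (g.roots.map fun a => z₀ * (z₀ - a)⁻¹).sum := by
      rw [hS, Multiset.sum_map_mul_left]
    have h2 : (z₀ * S).re = (g.roots.map fun a => (z₀ * (z₀ - a)⁻¹).re).sum := by
      rw [h1, re_multiset_sum, Multiset.map_map]
      rfl
    rw [h2]
    have hzero : ((g.roots.map fun _ => (0:ℝ)).sum) = 0 := by simp
    calc (0:ℝ) = (g.roots.map fun _ => (0:ℝ)).sum := hzero.symm
      _ < (g.roots.map fun a => (z₀ * (z₀ - a)⁻¹).re).sum := by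
          apply Multiset.sum_lt_sum_of_nonempty hroots_ne
          intro r hr
          have hrabs := hroots r hr
          have hsub : z₀ - r ≠ 0 := sub_ne_zero.2 (hz₀root r hr)
          have hN : 0 < Complex.normSq (z₀ - r) := Complex.normSq_pos.2 hsub
          have hip : z₀.re * r.re + z₀.im * r.im ≤ Complex.abs r := by
            have h3 := Complex.re_le_abs (z₀ * (starRingEnd ℂ) r)
            rw [map_mul, Complex.abs_conj, hz₀, one_mul] at h3
            simpa [Complex.mul_re, Complex.conj_re, Complex.conj_im, mul_comm] using h3
          have hsq : z₀.re * z₀.re + z₀.im * z₀.im = 1 := by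
            have := Complex.sq_abs z₀
            rw [hz₀] at this
            simpa [Complex.normSq_apply] using this.symm
          have hrw : z₀ * (z₀ - r)⁻¹ = z₀ / (z₀ - r) := (div_eq_mul_inv _ _).symm
          rw [hrw, Complex.div_re]
          rw [← add_div]
          apply div_pos _ hN
          simp only [Complex.sub_re, Complex.sub_im]
          nlinarith
  -- derivative of g at z₀ is nonzero
  have hprod_ne : Polynomial.eval z₀ (g.roots.map fun a => X - C a).prod ≠ 0 := by
    rw [Polynomial.eval_multiset_prod]
    apply Multiset.prod_ne_zero
    intro h0
    rw [Multiset.map_map, Multiset.mem_map] at h0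
    obtain ⟨a, ha, heq⟩ := h0
    simp only [Function.comp_apply, Polynomial.eval_sub, Polynomial.eval_X,
      Polynomial.eval_C] at heq
    exact hz₀root a ha (sub_eq_zero.1 heq)
  have hS_ne : S ≠ 0 := by
    intro h0
    rw [h0, mul_zero] at hre_pos
    simp at hre_pos
  have hgderiv_ne : Polynomial.eval z₀ (Polynomial.derivative g) ≠ 0 := by
    rw [← hfact, Polynomial.derivative_C_mul, Polynomial.eval_C_mul,
      logderiv _ _ hz₀root]
    rw [← hS]
    apply mul_ne_zero hlc (mul_ne_zero hprod_ne _)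
    intro h0
    rw [h0, mul_zero] at hre_pos
    simp at hre_pos
  -- but derivative of g at z₀ is zero
  apply hgderiv_ne
  have hlamd : lam * d = Polynomial.eval z₀ (Polynomial.derivative p) := by
    rw [hlam]
    field_simp
  rw [hg]
  simp only [Polynomial.derivative_sub, Polynomial.derivative_C_mul,
    Polynomial.derivative_X_pow, Polynomial.eval_sub, Polynomial.eval_mul,
    Polynomial.eval_C, Polynomial.eval_pow, Polynomial.eval_X, Polynomial.eval_natCast]
  rw [← hlamd, hd]
  push_cast
  ring

lemma bernstein_ball (n : ℕ) (p : Polynomial ℂ) (hdeg : p.natDegree < n) (M : ℝ)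
    (hM : ∀ z : ℂ, Complex.abs z = 1 → Complex.abs (p.eval z) ≤ M) :
    ∀ z ∈ Metric.closedBall (0:ℂ) 1, Complex.abs (p.derivative.eval z) ≤ n * M := by
  intro z hz
  rw [← closure_ball (0:ℂ) one_ne_zero] at hz
  refine Complex.norm_le_of_forall_mem_frontier_norm_le Metric.isBounded_ball
    (Polynomial.differentiable _).diffContOnCl ?_ hz
  intro ζ hζ
  rw [frontier_ball (0:ℂ) one_ne_zero, mem_sphere_zero_iff_norm] at hζ
  exact bernstein_ineq n p hdeg M hM ζ hζ

lemma exp_lip (x y : ℝ) :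
    Complex.abs (Complex.exp (2*(Real.pi:ℂ)*Complex.I*(x:ℂ)) -
      Complex.exp (2*(Real.pi:ℂ)*Complex.I*(y:ℂ))) ≤ 2 * Real.pi * |x - y| := by
  set c : ℂ := 2*(Real.pi:ℂ)*Complex.I with hc
  have hder : ∀ t : ℝ, HasDerivAt (fun t : ℝ => Complex.exp (c * (t:ℂ)))
      (Complex.exp (c * (t:ℂ)) * c) t := by
    intro t
    have h1 : HasDerivAt (fun t : ℝ => (t : ℂ)) 1 t := Complex.ofRealCLM.hasDerivAt
    have h2 : HasDerivAt (fun t : ℝ => c * (t:ℂ)) c t := by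
      simpa using h1.const_mul c
    exact h2.cexp
  have hbd : ∀ t : ℝ, ‖Complex.exp (c * (t:ℂ)) * c‖ ≤ 2 * Real.pi := by
    intro t
    rw [norm_mul]
    have h1 : ‖Complex.exp (c * (t:ℂ))‖ = 1 := by
      have : c * (t:ℂ) = ((2 * Real.pi * t : ℝ) : ℂ) * Complex.I := by
        rw [hc]; push_cast; ring
      rw [this]
      exact Complex.abs_exp_ofReal_mul_I _
    have h2 : ‖c‖ = 2 * Real.pi := by
      rw [hc]
      simp [Real.pi_nonneg]
    rw [h1, h2, one_mul]
  have := Convex.norm_image_sub_le_of_norm_hasDerivWithin_le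
    (f := fun t : ℝ => Complex.exp (c * (t:ℂ)))
    (f' := fun t : ℝ => Complex.exp (c * (t:ℂ)) * c) (s := Set.univ)
    (fun t _ => (hder t).hasDerivWithinAt) (fun t _ => hbd t) convex_univ
    (Set.mem_univ y) (Set.mem_univ x)
  simpa [mul_comm c, Real.norm_eq_abs, Complex.norm_eq_abs] using this


end BernsteinHelpers

/-- Discretization bound: for a polynomial `W(e^{i2πf}) = Σ_m w_m e^{i2πmf}` of degree at most
`Mbar − 1`, the sup over `f ∈ [0,1)` of `|W|` is at most `(1 − πMbar/N)⁻¹` times the maximum of `|W|`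
on the uniform `N`-point grid, whenever `N > πMbar`. -/
theorem sup_abs_le_inv_mul_grid_max (Mbar N : ℕ) (w : Fin Mbar → ℂ)
    (hN : Real.pi * (Mbar : ℝ) < (N : ℝ)) :
    sSup {r : ℝ | ∃ f ∈ Set.Ico (0 : ℝ) 1,
        r = ‖(∑ m : Fin Mbar, w m * Complex.exp (2 * π * I * (m : ℕ) * (f : ℂ)))‖}
      ≤ (1 - Real.pi * (Mbar : ℝ) / (N : ℝ))⁻¹ *
        sSup {r : ℝ | ∃ m : Fin N,
          r = ‖(∑ m' : Fin Mbar,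
            w m' * Complex.exp (2 * π * I * (m' : ℕ) * (((m : ℕ) : ℂ) / (N : ℂ))))‖} := by
  have hNpos : 0 < N := by
    by_contra h
    push_neg at h
    interval_cases N
    simp at hN
    nlinarith [Real.pi_pos, Nat.cast_nonneg (α := ℝ) Mbar]
  set W : ℝ → ℂ := fun f => ∑ m : Fin Mbar, w m * Complex.exp (2 * π * I * (m : ℕ) * (f : ℂ))
    with hW
  set A : Set ℝ := {r : ℝ | ∃ f ∈ Set.Ico (0 : ℝ) 1, r = Complex.abs (W f)} with hA
  set v : Fin N → ℝ := fun m => Complex.abs (∑ m' : Fin Mbar,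
      w m' * Complex.exp (2 * π * I * (m' : ℕ) * (((m : ℕ) : ℂ) / (N : ℂ)))) with hv
  set B : Set ℝ := {r : ℝ | ∃ m : Fin N, r = v m} with hB
  -- boundedness and nonemptiness
  have hA_ne : A.Nonempty := ⟨_, 0, by norm_num, rfl⟩
  have hA_bdd : BddAbove A := by
    refine ⟨∑ m : Fin Mbar, Complex.abs (w m), ?_⟩
    rintro r ⟨f, hf, rfl⟩
    refine le_trans (Complex.abs.sum_le _ _) (Finset.sum_le_sum fun m _ => ?_)
    rw [map_mul]
    have h1 : Complex.abs (Complex.exp (2 * π * I * (m : ℕ) * (f : ℂ))) = 1 := by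
      have h2 : 2 * (π:ℂ) * I * (m : ℕ) * (f : ℂ) = ((2*π*m*f : ℝ) : ℂ) * I := by
        push_cast; ring
      rw [h2, Complex.abs_exp_ofReal_mul_I]
    rw [h1, mul_one]
  have hB_ne : B.Nonempty := ⟨v ⟨0, hNpos⟩, ⟨0, hNpos⟩, rfl⟩
  have hB_bdd : BddAbove B := by
    have : B = Set.range v := by ext r; simp [hB, Set.mem_range, eq_comm]
    rw [this]
    exact (Set.finite_range v).bddAbove
  set Wb : ℝ := sSup A with hWb
  set Gm : ℝ := sSup B with hGm
  have hWb0 : 0 ≤ Wb := le_csSup hA_bdd ⟨0, by norm_num, rfl⟩ |>.trans' (Complex.abs.nonneg _)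
  have hGm_mem : ∀ m : Fin N, v m ≤ Gm := fun m => le_csSup hB_bdd ⟨m, rfl⟩
  rcases Nat.eq_zero_or_pos Mbar with hM0 | hM1
  · -- degenerate case
    subst hM0
    have hA0 : ∀ r ∈ A, r ≤ (1 - Real.pi * (0:ℕ) / N)⁻¹ * Gm := by
      rintro r ⟨f, hf, rfl⟩
      simp only [hW, Finset.univ_eq_empty, Finset.sum_empty, map_zero]
      have : v ⟨0, hNpos⟩ = 0 := by simp [hv]
      have h2 := hGm_mem ⟨0, hNpos⟩
      rw [this] at h2
      simp only [Nat.cast_zero, mul_zero, zero_div, sub_zero, inv_one, one_mul]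
      exact h2
    exact csSup_le hA_ne hA0
  -- main case
  set q : Polynomial ℂ := ∑ m : Fin Mbar, Polynomial.C (w m) * Polynomial.X ^ (m:ℕ) with hq
  have hqdeg : q.natDegree < Mbar := by
    have h1 : q.natDegree ≤ Mbar - 1 := by
      apply Polynomial.natDegree_sum_le_of_forall_le
      intro m _
      refine le_trans (Polynomial.natDegree_mul_le) ?_
      rw [Polynomial.natDegree_C, Polynomial.natDegree_X_pow, zero_add]
      omega
    omega
  have heval : ∀ f : ℝ, q.eval (Complex.exp (2*(Real.pi:ℂ)*I*(f:ℂ))) = W f := by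
    intro f
    rw [hq, Polynomial.eval_finset_sum, hW]
    refine Finset.sum_congr rfl fun m _ => ?_
    rw [Polynomial.eval_mul, Polynomial.eval_C, Polynomial.eval_pow, Polynomial.eval_X,
      ← Complex.exp_nat_mul]
    congr 1
    ring
  have hcirc : ∀ z : ℂ, Complex.abs z = 1 → Complex.abs (q.eval z) ≤ Wb := by
    intro z hz1
    set t : ℝ := Complex.arg z / (2*Real.pi) with ht
    set f : ℝ := Int.fract t with hf
    have hfmem : f ∈ Set.Ico (0:ℝ) 1 := ⟨Int.fract_nonneg t, Int.fract_lt_one t⟩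
    have hexp : Complex.exp (2*(Real.pi:ℂ)*I*(f:ℂ)) = z := by
      have hpi : (Real.pi : ℝ) ≠ 0 := Real.pi_ne_zero
      have h1R : 2*Real.pi*f = z.arg + (-(⌊t⌋:ℝ))*(2*Real.pi) := by
        rw [hf, Int.fract, ht]
        field_simp
        ring
      have h1 : 2*(Real.pi:ℂ)*I*(f:ℂ) =
          (Complex.arg z) * I + (-(⌊t⌋:ℂ)) * (2*(Real.pi:ℂ)*I) := by
        have h1C : ((2*Real.pi*f : ℝ) : ℂ) = ((z.arg + (-(⌊t⌋:ℝ))*(2*Real.pi) : ℝ) : ℂ) := by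
          exact_mod_cast congrArg (fun u : ℝ => (u:ℂ)) h1R
        push_cast at h1C
        linear_combination I * h1C
      have h9 : Complex.exp ((-(⌊t⌋:ℂ)) * (2*(Real.pi:ℂ)*I)) = 1 := by
        simpa using Complex.exp_int_mul_two_pi_mul_I (-⌊t⌋)
      rw [h1, Complex.exp_add, h9, mul_one]
      have h2 := Complex.abs_mul_exp_arg_mul_I z
      rw [hz1, Complex.ofReal_one, one_mul] at h2
      exact h2
    rw [← hexp, heval]
    exact le_csSup hA_bdd ⟨f, hfmem, rfl⟩
  have hball := bernstein_ball Mbar q hqdeg Wb hcirc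
  have key : ∀ r ∈ A, r ≤ Gm + Real.pi * Mbar / N * Wb := by
    rintro r ⟨f, hf, rfl⟩
    set x : ℝ := (N:ℝ) * f with hx
    set m₀ : ℤ := round x with hm₀
    have hround : |x - (m₀:ℝ)| ≤ 1/2 := abs_sub_round x
    have hNR : (0:ℝ) < N := by exact_mod_cast hNpos
    have hx0 : 0 ≤ x := mul_nonneg (le_of_lt hNR) hf.1
    have habs := abs_le.1 hround
    have hm₀0 : 0 ≤ m₀ := by
      have h2 : (-1:ℝ) < (m₀:ℝ) := by linarith
      have h3 : (-1:ℤ) < m₀ := by exact_mod_cast h2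
      omega
    set k : ℕ := m₀.toNat / N with hk
    set m₁ : ℕ := m₀.toNat % N with hm₁
    have hm₁N : m₁ < N := Nat.mod_lt _ hNpos
    have htonat : (m₀.toNat : ℤ) = m₀ := Int.toNat_of_nonneg hm₀0
    have hm0split : m₀.toNat = N * k + m₁ := (Nat.div_add_mod _ _).symm
    set sgrid : ℝ := (m₀ : ℝ) / N with hsgrid
    have hfs : |f - sgrid| ≤ 1/(2*N) := by
      have h4 : f - sgrid = (x - m₀)/N := by
        rw [hsgrid, hx]; field_simp
      rw [h4, abs_div, abs_of_pos hNR]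
      rw [div_le_div_iff₀ hNR (by positivity)]
      calc |x - (m₀:ℝ)| * (2*N) ≤ (1/2) * (2*N) := by
            apply mul_le_mul_of_nonneg_right hround (by positivity)
        _ = 1 * N := by ring
    have hsC : (sgrid:ℂ) = (m₁:ℂ)/(N:ℂ) + (k:ℂ) := by
      have hNC : (N:ℂ) ≠ 0 := by exact_mod_cast Nat.cast_ne_zero.2 (Nat.pos_iff_ne_zero.1 hNpos)
      have hZ2 : m₀ = (m₁:ℤ) + (k:ℤ) * (N:ℤ) := by
        have h' : ((N * k + m₁ : ℕ) : ℤ) = m₀ := by rw [← hm0split]; exact htonat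
        push_cast at h'
        linarith
      have h5 : (m₀:ℂ) = (m₁:ℂ) + (k:ℂ) * (N:ℂ) := by exact_mod_cast hZ2
      rw [hsgrid]
      push_cast
      rw [h5]
      field_simp
    have hWs : W sgrid = ∑ m' : Fin Mbar,
        w m' * Complex.exp (2 * (Real.pi:ℂ) * I * (m' : ℕ) * ((m₁:ℂ) / (N:ℂ))) := by
      rw [hW]
      refine Finset.sum_congr rfl fun m' _ => ?_
      congr 1
      rw [hsC, mul_add, Complex.exp_add]
      have h6 : 2*(Real.pi:ℂ)*I*(m':ℕ)*(k:ℂ) = ((m' * k : ℕ) : ℤ) * (2*(Real.pi:ℂ)*I) := by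
        push_cast; ring
      rw [h6, Complex.exp_int_mul_two_pi_mul_I, mul_one]
    have hWsG : Complex.abs (W sgrid) ≤ Gm := by
      rw [hWs]
      exact hGm_mem ⟨m₁, hm₁N⟩
    -- chord bound
    set zf : ℂ := Complex.exp (2*(Real.pi:ℂ)*I*(f:ℂ)) with hzf
    set zs : ℂ := Complex.exp (2*(Real.pi:ℂ)*I*(sgrid:ℂ)) with hzs
    have habs1 : ∀ u : ℝ, Complex.abs (Complex.exp (2*(Real.pi:ℂ)*I*(u:ℂ))) = 1 := by
      intro u
      have h7 : 2*(Real.pi:ℂ)*I*(u:ℂ) = ((2*Real.pi*u : ℝ) : ℂ) * I := by push_cast; ring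
      rw [h7, Complex.abs_exp_ofReal_mul_I]
    have hzf_mem : zf ∈ Metric.closedBall (0:ℂ) 1 := by
      rw [Metric.mem_closedBall, dist_zero_right, Complex.norm_eq_abs, hzf, habs1]
    have hzs_mem : zs ∈ Metric.closedBall (0:ℂ) 1 := by
      rw [Metric.mem_closedBall, dist_zero_right, Complex.norm_eq_abs, hzs, habs1]
    have hlip := Convex.norm_image_sub_le_of_norm_deriv_le (𝕜 := ℂ)
      (f := fun z : ℂ => q.eval z) (s := Metric.closedBall (0:ℂ) 1)
      (fun x _ => q.differentiableAt) (C := (Mbar:ℝ) * Wb)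
      (fun x hx => by rw [Polynomial.deriv]; exact hball x hx)
      (convex_closedBall _ _) hzs_mem hzf_mem
    have hchord : ‖zf - zs‖ ≤ 2 * Real.pi * |f - sgrid| := exp_lip f sgrid
    have hMWb : (0:ℝ) ≤ (Mbar:ℝ) * Wb := mul_nonneg (Nat.cast_nonneg _) hWb0
    have hdiff : Complex.abs (W f - W sgrid) ≤ (Mbar:ℝ) * Wb * (2 * Real.pi * (1/(2*N))) := by
      rw [← heval f, ← heval sgrid]
      calc Complex.abs (q.eval zf - q.eval zs) ≤ (Mbar:ℝ) * Wb * ‖zf - zs‖ := hlip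
        _ ≤ (Mbar:ℝ) * Wb * (2 * Real.pi * |f - sgrid|) := by
            apply mul_le_mul_of_nonneg_left hchord hMWb
        _ ≤ (Mbar:ℝ) * Wb * (2 * Real.pi * (1/(2*N))) := by
            apply mul_le_mul_of_nonneg_left _ hMWb
            apply mul_le_mul_of_nonneg_left hfs (by positivity)
    calc Complex.abs (W f) = Complex.abs (W sgrid + (W f - W sgrid)) := by ring_nf
      _ ≤ Complex.abs (W sgrid) + Complex.abs (W f - W sgrid) := Complex.abs.add_le _ _
      _ ≤ Gm + (Mbar:ℝ) * Wb * (2 * Real.pi * (1/(2*N))) := add_le_add hWsG hdiff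
      _ = Gm + Real.pi * Mbar / N * Wb := by
          field_simp
  have hWbG : Wb ≤ Gm + Real.pi * Mbar / N * Wb := csSup_le hA_ne key
  have hc1 : Real.pi * Mbar / N < 1 := by
    rw [div_lt_one (by exact_mod_cast hNpos)]
    exact hN
  have h1c : (0:ℝ) < 1 - Real.pi * Mbar / N := by linarith
  have hfin : (1 - Real.pi * Mbar / N) * Wb ≤ Gm := by nlinarith
  calc Wb = (1 - Real.pi * Mbar / N)⁻¹ * ((1 - Real.pi * Mbar / N) * Wb) :=
        (inv_mul_cancel_left₀ (ne_of_gt h1c) Wb).symm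
    _ ≤ (1 - Real.pi * Mbar / N)⁻¹ * Gm :=
        mul_le_mul_of_nonneg_left hfin (le_of_lt (inv_pos.2 h1c))
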